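/- Consider the linearized mixed-traffic system with n vehicles and CAV index set S = {i1 < i2 < ... < im} (m ≥ 1). If i1 > 1 (the vehicle immediately behind the head vehicle is a human-driven vehicle), then the pair (A, B) is not controllable, i.e., the controllability matrix [B, AB, A²B, ..., A^{2n−1}B] has rank strictly less than 2n. -/

import Mathlib

open Matrix

noncomputable section

/-- 2×2 block for HDV diagonal. -/
def PP1 (α1 α2 : ℝ) : Matrix (Fin 2) (Fin 2) ℝ := !![0, -1; α1, -α2]
/-- 2×2 block for HDV subdiagonal. -/
def PP2 (α3 : ℝ) : Matrix (Fin 2) (Fin 2) ℝ := !![0, 1; 0, α3]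
/-- 2×2 block for CAV diagonal. -/
def SS1 : Matrix (Fin 2) (Fin 2) ℝ := !![0, -1; 0, 0]
/-- 2×2 block for CAV subdiagonal. -/
def SS2 : Matrix (Fin 2) (Fin 2) ℝ := !![0, 1; 0, 0]

/-- The mixed-traffic system matrix `A ∈ ℝ^{2n×2n}`.  Vehicles are indexed `0,…,n-1`
(0-indexed versions of `1,…,n`); `isCAV i` says the `(i+1)`-th vehicle is a CAV.
The `i`-th 2×2 diagonal block is `S1` for a CAV and `P1` for an HDV; the `(i,i-1)`
subdiagonal block is `S2` for a CAV and `P2` for an HDV; all other blocks vanish. -/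
def trafficA (n : ℕ) (α1 α2 α3 : ℝ) (isCAV : Fin n → Prop) [DecidablePred isCAV] :
    Matrix (Fin (2 * n)) (Fin (2 * n)) ℝ :=
  Matrix.of fun r c =>
    if (r : ℕ) / 2 = (c : ℕ) / 2 then
      (if isCAV ⟨(r : ℕ) / 2, by have := r.isLt; omega⟩ then SS1 else PP1 α1 α2)
        ⟨(r : ℕ) % 2, by omega⟩ ⟨(c : ℕ) % 2, by omega⟩
    else if (r : ℕ) / 2 = (c : ℕ) / 2 + 1 then
      (if isCAV ⟨(r : ℕ) / 2, by have := r.isLt; omega⟩ then SS2 else PP2 α3)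
        ⟨(r : ℕ) % 2, by omega⟩ ⟨(c : ℕ) % 2, by omega⟩
    else 0

/-- The input matrix `B ∈ ℝ^{2n×m}`: the `j`-th column is the (1-indexed) standard basis
vector `e_{2n}^{2·i_j}`, where `ι j` is the 0-indexed position of the `j`-th CAV
(so the 1-indexed CAV index is `i_j = ι j + 1`). -/
def trafficB (n m : ℕ) (ι : Fin m → Fin n) : Matrix (Fin (2 * n)) (Fin m) ℝ :=
  Matrix.of fun r j => if (r : ℕ) = 2 * (ι j : ℕ) + 1 then 1 else 0

/-- The controllability matrix `[B, AB, …, A^{N-1}B]` (columns indexed by `Fin N × q`). -/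
def ctrbMat {N : ℕ} {q : Type*} [Fintype q] (A : Matrix (Fin N) (Fin N) ℝ)
    (B : Matrix (Fin N) q ℝ) : Matrix (Fin N) (Fin N × q) ℝ :=
  Matrix.of fun r kj => (A ^ (kj.1 : ℕ) * B) r kj.2

end


theorem rank_lt_of_zero_row {N : ℕ} {q : Type*} [Fintype q] (M : Matrix (Fin N) q ℝ)
    (r : Fin N) (h : ∀ c, M r c = 0) : M.rank < N := by
  have hle : LinearMap.range M.mulVecLin ≤
      LinearMap.ker (LinearMap.proj (R := ℝ) (φ := fun _ : Fin N => ℝ) r) := by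
    rintro y ⟨x, rfl⟩
    simp [LinearMap.mem_ker, Matrix.mulVecLin_apply, Matrix.mulVec, dotProduct, h]
  have hne : LinearMap.range M.mulVecLin ≠ ⊤ := by
    intro htop
    have hmem : Pi.single r (1 : ℝ) ∈
        LinearMap.ker (LinearMap.proj (R := ℝ) (φ := fun _ : Fin N => ℝ) r) :=
      hle (htop ▸ Submodule.mem_top)
    simp [LinearMap.mem_ker] at hmem
  have hlt := Submodule.finrank_lt (K := ℝ) (V := Fin N → ℝ) hne
  rw [Matrix.rank]
  simpa using hlt

theorem traffic_zero_rows (n m : ℕ) (hn : 1 ≤ n) (hm : 0 < m) (α1 α2 α3 : ℝ)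
    (ι : Fin m → Fin n) (hmono : StrictMono ι)
    (hfirst : 0 < (ι ⟨0, hm⟩ : ℕ)) :
    ∀ (k : ℕ) (r : Fin (2 * n)), (r : ℕ) < 2 → ∀ c,
      ((trafficA n α1 α2 α3 (fun v => ∃ j, ι j = v)) ^ k * trafficB n m ι) r c = 0 := by
  intro k
  induction k with
  | zero =>
    intro r hr c
    rw [pow_zero, Matrix.one_mul]
    have h1 : (ι ⟨0, hm⟩ : ℕ) ≤ (ι c : ℕ) := hmono.monotone (by simp [Fin.le_def])
    simp only [trafficB, Matrix.of_apply]
    rw [if_neg (by omega)]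
  | succ k ih =>
    intro r hr c
    rw [pow_succ', Matrix.mul_assoc, Matrix.mul_apply]
    apply Finset.sum_eq_zero
    intro j _
    by_cases hj : (j : ℕ) < 2
    · rw [ih j hj c, mul_zero]
    · have hA : trafficA n α1 α2 α3 (fun v => ∃ j, ι j = v) r j = 0 := by
        simp only [trafficA, Matrix.of_apply]
        rw [if_neg (by omega), if_neg (by omega)]
      rw [hA, zero_mul]

/-- If the vehicle immediately behind the head vehicle is an HDV
(`i₁ > 1`, i.e. the 0-indexed first CAV position is positive), then the pair
`(A, B)` of the linearized mixed-traffic system is not controllable: the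
controllability matrix has rank strictly less than `2n`. -/
theorem mixed_traffic_not_controllable_of_first_vehicle_HDV
    (n m : ℕ) (hn : 1 ≤ n) (hm : 0 < m) (α1 α2 α3 : ℝ)
    (ι : Fin m → Fin n) (hmono : StrictMono ι)
    (hfirst : 0 < (ι ⟨0, hm⟩ : ℕ)) :
    (ctrbMat (trafficA n α1 α2 α3 (fun v => ∃ j, ι j = v)) (trafficB n m ι)).rank
      < 2 * n := by
  apply rank_lt_of_zero_row _ (⟨0, by omega⟩ : Fin (2 * n))
  intro kj
  exact traffic_zero_rows n m hn hm α1 α2 α3 ι hmono hfirst kj.1 ⟨0, by omega⟩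
    (by norm_num) kj.2
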